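/- (McDiarmid/Karp) Let G be any finite graph and x, y ∈ V(G). The probability that x and y are connected when each edge of G is independently present with probability 1/2 equals the probability that there is a directed path from x to y when each edge of G is independently given one of its two orientations with probability 1/2. -/

import Mathlib

open scoped Classical

noncomputable section

/-- Indicator of a proposition, as a real number. -/
def pInd (P : Prop) : ℝ := if P then 1 else 0

variable {V : Type}

/-- The spanning subgraph of `G` consisting of the open edges of the percolation
configuration `ω`. -/
def openSubgraph (G : SimpleGraph V) (ω : Sym2 V → Bool) : SimpleGraph V where
  Adj a b := G.Adj a b ∧ ω s(a, b) = true
  symm := by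
    constructor
    intro a b ⟨h1, h2⟩
    exact ⟨h1.symm, by rwa [Sym2.eq_swap]⟩
  loopless := ⟨fun a ⟨h, _⟩ => G.irrefl h⟩

/-- Connection probability when each edge is present independently with probability 1/2. -/
def Phalf [Fintype V] [DecidableEq V] (G : SimpleGraph V) (x y : V) : ℝ :=
  (∑ ω : Sym2 V → Bool, pInd ((openSubgraph G ω).Reachable x y)) /
    2 ^ Fintype.card (Sym2 V)

/-- Given an orientation `d` of the edges (the edge `e` points from `e.out.1` to
`e.out.2` when `d e = true`, and the other way when `d e = false`), `dirStep G d a b`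
says that there is an edge of `G` directed from `a` to `b`. -/
def dirStep (G : SimpleGraph V) (d : Sym2 V → Bool) (a b : V) : Prop :=
  G.Adj a b ∧ ((s(a, b)).out = (a, b) ∧ d s(a, b) = true ∨
    (s(a, b)).out = (b, a) ∧ d s(a, b) = false)

/-- Probability that there is a directed path from `x` to `y` when every edge of `G` is
given one of its two orientations independently with probability 1/2. -/
def Pdir [Fintype V] [DecidableEq V] (G : SimpleGraph V) (x y : V) : ℝ :=
  (∑ d : Sym2 V → Bool, pInd (Relation.ReflTransGen (dirStep G d) x y)) /
    2 ^ Fintype.card (Sym2 V)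

/-! ### Auxiliary machinery for the McDiarmid/Karp argument -/

lemma pInd_congr {P Q : Prop} (h : P ↔ Q) : pInd P = pInd Q := by
  unfold pInd
  by_cases hp : P
  · rw [if_pos hp, if_pos (h.mp hp)]
  · rw [if_neg hp, if_neg (fun hq => hp (h.mpr hq))]

lemma pInd_true {P : Prop} (h : P) : pInd P = 1 := if_pos h

lemma pInd_false {P : Prop} (h : ¬ P) : pInd P = 0 := if_neg h

lemma rtg_congr {S T : V → V → Prop} (h : ∀ a b, S a b ↔ T a b) {x y : V} :
    Relation.ReflTransGen S x y ↔ Relation.ReflTransGen T x y :=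
  ⟨fun hh => Relation.ReflTransGen.mono (fun a b => (h a b).mp) _ _ hh, fun hh => Relation.ReflTransGen.mono (fun a b => (h a b).mpr) _ _ hh⟩

/-- An extra edge pointing into an already reachable vertex is redundant. -/
lemma rtg_drop {S : V → V → Prop} {x u v y : V} (hu : Relation.ReflTransGen S x u) :
    Relation.ReflTransGen (fun a b => S a b ∨ (a = v ∧ b = u)) x y ↔
      Relation.ReflTransGen S x y := by
  constructor
  · intro h
    induction h with
    | refl => exact Relation.ReflTransGen.refl
    | tail _ hstep ih =>
      rcases hstep with h' | ⟨_, rfl⟩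
      · exact ih.tail h'
      · exact hu
  · exact fun h => Relation.ReflTransGen.mono (fun a b hab => Or.inl hab) _ _ h

lemma rtg_closed {S : V → V → Prop} {P : V → Prop} {x y : V} (hx : P x)
    (hcl : ∀ a b, P a → S a b → P b) (h : Relation.ReflTransGen S x y) : P y := by
  induction h with
  | refl => exact hx
  | tail _ hstep ih => exact hcl _ _ ih hstep

lemma mk_out (e : Sym2 V) : s(e.out.1, e.out.2) = e := by
  exact Quot.out_eq e

section Aux

variable [Fintype V] [DecidableEq V]

/-- Splitting a sum over configurations according to the value at one coordinate. -/
lemma sum_split (F : (Sym2 V → Bool) → ℝ) (e : Sym2 V) :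
    ∑ ω : Sym2 V → Bool, F ω =
      (∑ ω : Sym2 V → Bool,
        (F (Function.update ω e true) + F (Function.update ω e false))) / 2 := by
  have hinv : Function.Involutive
      (fun ω : Sym2 V → Bool => Function.update ω e (!ω e)) := by
    intro ω
    funext a
    by_cases ha : a = e
    · subst ha; simp
    · simp [Function.update_of_ne ha]
  have hperm : ∑ ω : Sym2 V → Bool, F (Function.update ω e (!ω e)) =
      ∑ ω : Sym2 V → Bool, F ω :=
    Fintype.sum_bijective _ hinv.bijective _ _ (fun ω => rfl)
  have hpt : ∀ ω : Sym2 V → Bool,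
      F (Function.update ω e true) + F (Function.update ω e false) =
        F ω + F (Function.update ω e (!ω e)) := by
    intro ω
    cases hω : ω e with
    | true =>
      have h1 : Function.update ω e true = ω := by
        conv_lhs => rw [← hω]
        exact Function.update_eq_self e ω
      rw [h1, Bool.not_true]
    | false =>
      have h1 : Function.update ω e false = ω := by
        conv_lhs => rw [← hω]
        exact Function.update_eq_self e ω
      rw [h1, Bool.not_false, add_comm]
  calc ∑ ω : Sym2 V → Bool, F ω
      = ((∑ ω : Sym2 V → Bool, F ω) + ∑ ω : Sym2 V → Bool, F ω) / 2 := by ring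
    _ = (∑ ω : Sym2 V → Bool, (F ω + F (Function.update ω e (!ω e)))) / 2 := by
        rw [Finset.sum_add_distrib, hperm]
    _ = _ := by
        rw [Finset.sum_congr rfl (fun ω _ => (hpt ω).symm)]

/-- Step relation for the undirected (percolation) model with decided digraph `D` and
undecided edges `A`. -/
def uStep (G : SimpleGraph V) (D : V → V → Prop) (A : Finset (Sym2 V))
    (ω : Sym2 V → Bool) (a b : V) : Prop :=
  D a b ∨ (G.Adj a b ∧ s(a, b) ∈ A ∧ ω s(a, b) = true)

/-- Step relation for the orientation model with decided digraph `D` and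
undecided edges `A`. -/
def oStep (G : SimpleGraph V) (D : V → V → Prop) (A : Finset (Sym2 V))
    (d : Sym2 V → Bool) (a b : V) : Prop :=
  D a b ∨ (s(a, b) ∈ A ∧ dirStep G d a b)

lemma main_lemma (G : SimpleGraph V) (x y : V) :
    ∀ (n : ℕ) (A : Finset (Sym2 V)), A.card = n → ∀ (D : V → V → Prop),
      (∑ ω : Sym2 V → Bool, pInd (Relation.ReflTransGen (uStep G D A ω) x y)) =
      (∑ d : Sym2 V → Bool, pInd (Relation.ReflTransGen (oStep G D A d) x y)) := by
  intro n
  induction n using Nat.strong_induction_on with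
  | _ n ih =>
    intro A hA D
    by_cases hxy : Relation.ReflTransGen D x y
    · trans (∑ _ω : Sym2 V → Bool, (1 : ℝ))
      · exact Finset.sum_congr rfl fun ω _ =>
          pInd_true ((Relation.ReflTransGen.mono (fun a b h => Or.inl h) _ _ hxy :
            Relation.ReflTransGen (uStep G D A _) x y))
      · exact (Finset.sum_congr rfl fun d _ =>
          pInd_true ((Relation.ReflTransGen.mono (fun a b h => Or.inl h) _ _ hxy :
            Relation.ReflTransGen (oStep G D A _) x y))).symm
    · by_cases hbad : ∃ e ∈ A, ∃ u v : V, e = s(u, v) ∧ ¬ G.Adj u v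
      · -- an element of `A` which is not an edge of `G`: just drop it
        obtain ⟨e, heA, u, v, he, hnadj⟩ := hbad
        have hnadj' : ∀ a b : V, s(a, b) = e → ¬ G.Adj a b := by
          intro a b hab
          rcases Sym2.eq_iff.mp (hab.trans he) with ⟨rfl, rfl⟩ | ⟨rfl, rfl⟩
          · exact hnadj
          · exact fun h => hnadj h.symm
        have hiU : ∀ (ω : Sym2 V → Bool) (a b : V),
            uStep G D A ω a b ↔ uStep G D (A.erase e) ω a b := by
          intro ω a b
          by_cases hab : s(a, b) = e
          · simp [uStep, hnadj' a b hab]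
          · simp [uStep, Finset.mem_erase, hab]
        have hiO : ∀ (d : Sym2 V → Bool) (a b : V),
            oStep G D A d a b ↔ oStep G D (A.erase e) d a b := by
          intro d a b
          by_cases hab : s(a, b) = e
          · constructor
            · rintro (hD | ⟨-, hdir⟩)
              · exact Or.inl hD
              · exact absurd hdir.1 (hnadj' a b hab)
            · rintro (hD | ⟨hmem, -⟩)
              · exact Or.inl hD
              · exact absurd hab (Finset.mem_erase.mp hmem).1
          · simp [oStep, Finset.mem_erase, hab]
        rw [Finset.sum_congr rfl (fun ω _ => pInd_congr (rtg_congr (hiU ω))),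
          Finset.sum_congr rfl (fun d _ => pInd_congr (rtg_congr (hiO d)))]
        exact ih _ (by rw [← hA]; exact Finset.card_erase_lt_of_mem heA) _ rfl D
      · by_cases hgood : ∃ e ∈ A, ∃ u v : V, e = s(u, v) ∧
            Relation.ReflTransGen D x u ∧ ¬ Relation.ReflTransGen D x v
        · -- the main induction step
          obtain ⟨e, heA, u, v, he, hu, hv⟩ := hgood
          push_neg at hbad
          have hadj : G.Adj u v := hbad e heA u v he
          have hcard : (A.erase e).card < n := by
            rw [← hA]; exact Finset.card_erase_lt_of_mem heA
          have hmemE : ∀ a b : V, s(a, b) = e → s(a, b) ∈ A := fun a b hab => by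
            rw [hab]; exact heA
          have hU1 : ∀ (ω : Sym2 V → Bool) (a b : V),
              uStep G D A (Function.update ω e true) a b ↔
                ((uStep G D (A.erase e) ω a b ∨ (a = u ∧ b = v)) ∨ (a = v ∧ b = u)) := by
            intro ω a b
            by_cases hab : s(a, b) = e
            · have hpair := Sym2.eq_iff.mp (hab.trans he)
              have hAdj : G.Adj a b := by
                rcases hpair with ⟨rfl, rfl⟩ | ⟨rfl, rfl⟩
                · exact hadj
                · exact hadj.symm
              constructor
              · rintro (hD | -)
                · exact Or.inl (Or.inl (Or.inl hD))
                · rcases hpair with h' | h'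
                  · exact Or.inl (Or.inr h')
                  · exact Or.inr h'
              · rintro ((h | h') | h')
                · rcases h with hD | ⟨-, hmem, -⟩
                  · exact Or.inl hD
                  · exact absurd hab (Finset.mem_erase.mp hmem).1
                · exact Or.inr ⟨hAdj, hmemE a b hab, by rw [hab, Function.update_self]⟩
                · exact Or.inr ⟨hAdj, hmemE a b hab, by rw [hab, Function.update_self]⟩
            · have hupd : Function.update ω e true s(a, b) = ω s(a, b) :=
                Function.update_of_ne hab _ _
              have hne1 : ¬(a = u ∧ b = v) := fun h => hab (by rw [h.1, h.2, ← he])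
              have hne2 : ¬(a = v ∧ b = u) := fun h =>
                hab (by rw [h.1, h.2, Sym2.eq_swap, ← he])
              simp [uStep, hupd, Finset.mem_erase, hab, hne1, hne2]
          have hU0 : ∀ (ω : Sym2 V → Bool) (a b : V),
              uStep G D A (Function.update ω e false) a b ↔ uStep G D (A.erase e) ω a b := by
            intro ω a b
            by_cases hab : s(a, b) = e
            · constructor
              · rintro (hD | ⟨-, -, hval⟩)
                · exact Or.inl hD
                · rw [hab, Function.update_self] at hval; simp at hval
              · rintro (hD | ⟨-, hmem, -⟩)
                · exact Or.inl hD
                · exact absurd hab (Finset.mem_erase.mp hmem).1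
            · have hupd : Function.update ω e false s(a, b) = ω s(a, b) :=
                Function.update_of_ne hab _ _
              simp [uStep, hupd, Finset.mem_erase, hab]
          have hout : (e.out.1 = u ∧ e.out.2 = v) ∨ (e.out.1 = v ∧ e.out.2 = u) :=
            Sym2.eq_iff.mp (by rw [mk_out e, he])
          have hadjout : G.Adj e.out.1 e.out.2 := by
            rcases hout with ⟨h1, h2⟩ | ⟨h1, h2⟩ <;> rw [h1, h2]
            · exact hadj
            · exact hadj.symm
          have houtne : ∀ a b : V, s(a, b) ≠ e →
              ¬(a = e.out.1 ∧ b = e.out.2) ∧ ¬(a = e.out.2 ∧ b = e.out.1) := by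
            intro a b hab
            constructor
            · rintro ⟨rfl, rfl⟩; exact hab (mk_out e)
            · rintro ⟨rfl, rfl⟩; exact hab (Sym2.eq_swap.trans (mk_out e))
          have hO1 : ∀ (d : Sym2 V → Bool) (a b : V),
              oStep G D A (Function.update d e true) a b ↔
                (oStep G D (A.erase e) d a b ∨ (a = e.out.1 ∧ b = e.out.2)) := by
            intro d a b
            by_cases hab : s(a, b) = e
            · constructor
              · rintro (hD | ⟨-, -, hdir⟩)
                · exact Or.inl (Or.inl hD)
                · rcases hdir with ⟨hout', -⟩ | ⟨-, hval⟩
                  · rw [hab] at hout'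
                    exact Or.inr ⟨(congrArg Prod.fst hout').symm,
                      (congrArg Prod.snd hout').symm⟩
                  · rw [hab, Function.update_self] at hval; simp at hval
              · rintro ((hD | ⟨hmem, -⟩) | ⟨rfl, rfl⟩)
                · exact Or.inl hD
                · exact absurd hab (Finset.mem_erase.mp hmem).1
                · refine Or.inr ⟨hmemE _ _ hab, hadjout, Or.inl ⟨?_, ?_⟩⟩
                  · rw [hab]
                  · rw [hab, Function.update_self]
            · have hupd : Function.update d e true s(a, b) = d s(a, b) :=
                Function.update_of_ne hab _ _
              have hne := houtne a b hab
              simp [oStep, dirStep, hupd, Finset.mem_erase, hab, hne.1]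
          have hO0 : ∀ (d : Sym2 V → Bool) (a b : V),
              oStep G D A (Function.update d e false) a b ↔
                (oStep G D (A.erase e) d a b ∨ (a = e.out.2 ∧ b = e.out.1)) := by
            intro d a b
            by_cases hab : s(a, b) = e
            · constructor
              · rintro (hD | ⟨-, -, hdir⟩)
                · exact Or.inl (Or.inl hD)
                · rcases hdir with ⟨-, hval⟩ | ⟨hout', -⟩
                  · rw [hab, Function.update_self] at hval; simp at hval
                  · rw [hab] at hout'
                    exact Or.inr ⟨(congrArg Prod.snd hout').symm,
                      (congrArg Prod.fst hout').symm⟩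
              · rintro ((hD | ⟨hmem, -⟩) | ⟨rfl, rfl⟩)
                · exact Or.inl hD
                · exact absurd hab (Finset.mem_erase.mp hmem).1
                · refine Or.inr ⟨hmemE _ _ hab, hadjout.symm, Or.inr ⟨?_, ?_⟩⟩
                  · rw [hab]
                  · rw [hab, Function.update_self]
            · have hupd : Function.update d e false s(a, b) = d s(a, b) :=
                Function.update_of_ne hab _ _
              have hne := houtne a b hab
              simp [oStep, dirStep, hupd, Finset.mem_erase, hab, hne.2]
          have hLU : (∑ ω : Sym2 V → Bool,
                pInd (Relation.ReflTransGen (uStep G D A ω) x y)) =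
              ((∑ ω : Sym2 V → Bool, pInd (Relation.ReflTransGen
                  (uStep G (fun a b => D a b ∨ (a = u ∧ b = v)) (A.erase e) ω) x y)) +
               (∑ ω : Sym2 V → Bool,
                pInd (Relation.ReflTransGen (uStep G D (A.erase e) ω) x y))) / 2 := by
            rw [sum_split (fun ω => pInd (Relation.ReflTransGen (uStep G D A ω) x y)) e,
              ← Finset.sum_add_distrib]
            congr 1
            refine Finset.sum_congr rfl fun ω _ => ?_
            have ht : Relation.ReflTransGen (uStep G D A (Function.update ω e true)) x y ↔
                Relation.ReflTransGen
                  (uStep G (fun a b => D a b ∨ (a = u ∧ b = v)) (A.erase e) ω) x y := by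
              refine Iff.trans (rtg_congr (hU1 ω)) (Iff.trans
                (rtg_drop (S := fun a b => uStep G D (A.erase e) ω a b ∨ (a = u ∧ b = v))
                  (v := v) (Relation.ReflTransGen.mono (fun a b h => Or.inl (Or.inl h)) _ _ hu))
                (rtg_congr fun a b => ?_))
              simp only [uStep]; tauto
            have hf := rtg_congr (hU0 ω) (x := x) (y := y)
            show pInd _ + pInd _ = _
            rw [pInd_congr ht, pInd_congr hf]
          have hRO : (∑ d : Sym2 V → Bool,
                pInd (Relation.ReflTransGen (oStep G D A d) x y)) =
              ((∑ d : Sym2 V → Bool, pInd (Relation.ReflTransGen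
                  (oStep G (fun a b => D a b ∨ (a = u ∧ b = v)) (A.erase e) d) x y)) +
               (∑ d : Sym2 V → Bool,
                pInd (Relation.ReflTransGen (oStep G D (A.erase e) d) x y))) / 2 := by
            rw [sum_split (fun d => pInd (Relation.ReflTransGen (oStep G D A d) x y)) e,
              ← Finset.sum_add_distrib]
            congr 1
            refine Finset.sum_congr rfl fun d _ => ?_
            have hD1iff : ∀ a b, (oStep G D (A.erase e) d a b ∨ (a = u ∧ b = v)) ↔
                oStep G (fun a b => D a b ∨ (a = u ∧ b = v)) (A.erase e) d a b := by
              intro a b; simp only [oStep]; tauto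
            have hO1' := hO1 d
            have hO0' := hO0 d
            rcases hout with ⟨h1, h2⟩ | ⟨h1, h2⟩
            · simp only [h1, h2] at hO1' hO0'
              have ht := Iff.trans (rtg_congr hO1' (x := x) (y := y)) (rtg_congr hD1iff)
              have hf := Iff.trans (rtg_congr hO0' (x := x) (y := y))
                (rtg_drop (S := oStep G D (A.erase e) d) (v := v)
                  (Relation.ReflTransGen.mono (fun a b h => Or.inl h) _ _ hu))
              show pInd _ + pInd _ = _
              rw [pInd_congr ht, pInd_congr hf]
            · simp only [h1, h2] at hO1' hO0'
              have ht := Iff.trans (rtg_congr hO1' (x := x) (y := y))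
                (rtg_drop (S := oStep G D (A.erase e) d) (v := v)
                  (Relation.ReflTransGen.mono (fun a b h => Or.inl h) _ _ hu))
              have hf := Iff.trans (rtg_congr hO0' (x := x) (y := y)) (rtg_congr hD1iff)
              show pInd _ + pInd _ = _
              rw [pInd_congr ht, pInd_congr hf, add_comm]
          rw [hLU, hRO, ih _ hcard _ rfl (fun a b => D a b ∨ (a = u ∧ b = v)),
            ih _ hcard _ rfl D]
        · -- no undecided edge on the boundary of the reachable set: both sides vanish
          push_neg at hbad hgood
          have hstop : ∀ S : V → V → Prop,
              (∀ a b, S a b → D a b ∨ s(a, b) ∈ A) → ¬ Relation.ReflTransGen S x y := by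
            intro S hS h
            refine hxy (rtg_closed (P := fun b => Relation.ReflTransGen D x b)
              Relation.ReflTransGen.refl (fun a b ha hab => ?_) h)
            rcases hS a b hab with hD | hmem
            · exact ha.tail hD
            · exact hgood s(a, b) hmem a b rfl ha
          trans (0 : ℝ)
          · exact Finset.sum_eq_zero fun ω _ => pInd_false
              (hstop _ (fun a b hab => hab.imp id fun h => h.2.1))
          · exact (Finset.sum_eq_zero fun d _ => pInd_false
              (hstop _ (fun a b hab => hab.imp id fun h => h.1))).symm

end Aux

/-- McDiarmid/Karp: percolation with `p = 1/2` and uniformly random orientation give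
the same connection probabilities. -/
theorem percolation_half_eq_random_orientation [Fintype V] [DecidableEq V]
    (G : SimpleGraph V) (x y : V) : Phalf G x y = Pdir G x y := by
  unfold Phalf Pdir
  congr 1
  have h1 : ∀ ω : Sym2 V → Bool, (openSubgraph G ω).Reachable x y ↔
      Relation.ReflTransGen (uStep G (fun _ _ => False) Finset.univ ω) x y := by
    intro ω
    rw [SimpleGraph.reachable_iff_reflTransGen]
    exact rtg_congr (fun a b => by simp [uStep, openSubgraph])
  have h2 : ∀ d : Sym2 V → Bool, Relation.ReflTransGen (dirStep G d) x y ↔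
      Relation.ReflTransGen (oStep G (fun _ _ => False) Finset.univ d) x y := by
    intro d
    exact rtg_congr (fun a b => by simp [oStep])
  rw [Finset.sum_congr rfl (fun ω _ => pInd_congr (h1 ω)),
    Finset.sum_congr rfl (fun d _ => pInd_congr (h2 d)),
    main_lemma G x y _ Finset.univ rfl _]

end
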